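/- arXiv:1507.07187 — 2 statements merged into one kernel-verified Lean document; each statement's English description precedes it below -/
import Mathlib

section
/- Let (X,d,μ) be a space of homogeneous type with quasi-triangle constant A₀ and upper dimension ω. Fix δ ∈ (0,1), k ∈ ℤ, a point y₀ ∈ X, and constants C₀, ν > 0, a > 0, η ∈ (0,1]. Suppose ψ : X → ℝ satisfies |ψ(x)| ≤ C₀ · μ(B(y₀,δ^k))^(−1/2) · exp(−ν (d(y₀,x)/δ^k)^a) for all x, and |ψ(x) − ψ(y)| ≤ C₀ · μ(B(y₀,δ^k))^(−1/2) · (d(x,y)/δ^k)^η · exp(−ν (d(y₀,x)/δ^k)^a) whenever d(x,y) ≤ δ^k. Then for every γ > 0 there is a constant C, depending only on C₀, ν, a, γ, η, A₀, the doubling constant and ω (but not on k, y₀ or ψ), such that for all x, y ∈ X with d(x,y) ≤ (2A₀)^(−1)(δ^k + d(x,y₀)): |ψ(x) − ψ(y)| / μ(B(y₀,δ^k))^(1/2) ≤ C · (d(x,y)/(δ^k + d(x,y₀)))^η · (V_{δ^k}(y₀) + V(x,y₀))^(−1) · (δ^k/(δ^k + d(x,y₀)))^γ. -/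
open MeasureTheory Real
open scoped ENNReal

/-- A space of homogeneous type in the sense of Coifman and Weiss:
a quasi-metric `d` with quasi-triangle constant `A0`, and a doubling
Borel measure `μ` with doubling constant `Cmu` and upper dimension `dim`. -/
structure SHT (X : Type*) [MeasurableSpace X] where
  d : X → X → ℝ
  μ : Measure X
  A0 : ℝ
  Cmu : ℝ
  dim : ℝ
  Cdim : ℝ
  one_le_A0 : 1 ≤ A0
  d_symm : ∀ x y, d x y = d y x
  d_nonneg : ∀ x y, 0 ≤ d x y
  d_eq_zero_iff : ∀ x y, d x y = 0 ↔ x = y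
  d_triangle : ∀ x y z, d x y ≤ A0 * (d x z + d z y)
  vol_pos : ∀ x r, 0 < r → 0 < μ {y | d x y < r}
  vol_lt_top : ∀ x r, 0 < r → μ {y | d x y < r} < ⊤
  doubling : ∀ x r, 0 < r →
    (μ {y | d x y < 2 * r}).toReal ≤ Cmu * (μ {y | d x y < r}).toReal
  dim_pos : 0 < dim
  upperDim : ∀ x r lam, 0 < r → 1 ≤ lam →
    (μ {y | d x y < lam * r}).toReal ≤ Cdim * lam ^ dim * (μ {y | d x y < r}).toReal

namespace SHT

variable {X : Type*} [MeasurableSpace X]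

/-- `V S x r` is `μ(B(x,r))` as a real number. -/
noncomputable def V (S : SHT X) (x : X) (r : ℝ) : ℝ := (S.μ {y | S.d x y < r}).toReal

/-- `Vd S x y` is `V(x,y) = μ(B(x,d(x,y)))`. -/
noncomputable def Vd (S : SHT X) (x y : X) : ℝ := S.V x (S.d x y)

end SHT

lemma poly_le_exp (β ν a : ℝ) (hβ : 0 < β) (hν : 0 < ν) (ha : 0 < a) :
    ∃ M > 0, ∀ s : ℝ, 0 ≤ s → (1 + s) ^ β ≤ M * Real.exp (ν * s ^ a) := by
  set n : ℕ := ⌈β / a⌉₊ with hn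
  set F : ℝ := (Nat.factorial n : ℝ) with hF
  have hFpos : 0 < F := by positivity
  have hna : β ≤ (n : ℝ) * a := by
    have h1 : β / a ≤ (n : ℝ) := Nat.le_ceil _
    calc β = (β / a) * a := by field_simp
      _ ≤ (n : ℝ) * a := by nlinarith
  have hνn : (0:ℝ) < ν ^ n := by positivity
  refine ⟨(2:ℝ) ^ β * (1 + F / ν ^ n), by positivity, ?_⟩
  intro s hs
  have hexp0 : (1:ℝ) ≤ Real.exp (ν * s ^ a) := by
    apply Real.one_le_exp; positivity
  have h2β : (0:ℝ) < (2:ℝ) ^ β := Real.rpow_pos_of_pos (by norm_num) β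
  have hfac : (0:ℝ) < F / ν ^ n := by positivity
  rcases le_or_gt s 1 with hs1 | hs1
  · have h1 : (1 + s) ^ β ≤ (2:ℝ) ^ β :=
      Real.rpow_le_rpow (by linarith) (by linarith) hβ.le
    calc (1 + s) ^ β ≤ (2:ℝ) ^ β := h1
      _ = (2:ℝ) ^ β * 1 * 1 := by ring
      _ ≤ (2:ℝ) ^ β * (1 + F / ν ^ n) * Real.exp (ν * s ^ a) := by
          apply mul_le_mul (by nlinarith) hexp0 (by norm_num) (by positivity)
  · have hs0 : (0:ℝ) < s := by linarith
    have h1 : (1 + s) ^ β ≤ (2 * s) ^ β :=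
      Real.rpow_le_rpow (by linarith) (by linarith) hβ.le
    have h2 : (2 * s) ^ β = (2:ℝ) ^ β * s ^ β :=
      Real.mul_rpow (by norm_num) hs0.le
    have h3 : s ^ β ≤ s ^ ((n : ℝ) * a) :=
      Real.rpow_le_rpow_of_exponent_le hs1.le hna
    have h4 : s ^ ((n : ℝ) * a) = (s ^ a) ^ n := by
      rw [mul_comm, Real.rpow_mul hs0.le, Real.rpow_natCast]
    have hu : 0 ≤ ν * s ^ a := by positivity
    have h5 : (ν * s ^ a) ^ n ≤ F * Real.exp (ν * s ^ a) := by
      have := Real.pow_div_factorial_le_exp (ν * s ^ a) hu n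
      rw [div_le_iff₀ hFpos] at this
      linarith [this]
    have h6 : (s ^ a) ^ n ≤ F / ν ^ n * Real.exp (ν * s ^ a) := by
      rw [div_mul_eq_mul_div, le_div_iff₀ hνn]
      calc (s ^ a) ^ n * ν ^ n = (ν * s ^ a) ^ n := by rw [mul_pow]; ring
        _ ≤ F * Real.exp (ν * s ^ a) := h5
    calc (1 + s) ^ β ≤ (2:ℝ) ^ β * s ^ β := by rw [← h2]; exact h1
      _ ≤ (2:ℝ) ^ β * (s ^ a) ^ n := by rw [← h4]; nlinarith
      _ ≤ (2:ℝ) ^ β * (F / ν ^ n * Real.exp (ν * s ^ a)) := by nlinarith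
      _ ≤ (2:ℝ) ^ β * (1 + F / ν ^ n) * Real.exp (ν * s ^ a) := by
          have := Real.exp_pos (ν * s ^ a); nlinarith

lemma exp_cancel {u Z Mc : ℝ} (h : Z ≤ Mc * Real.exp u) :
    Real.exp (-u) * Z ≤ Mc := by
  calc Real.exp (-u) * Z ≤ Real.exp (-u) * (Mc * Real.exp u) :=
        mul_le_mul_of_nonneg_left h (Real.exp_pos _).le
    _ = Mc := by rw [Real.exp_neg]; field_simp

set_option maxHeartbeats 1000000 in
/-- decay plus Hölder regularity of a wavelet implies the
test-function smoothness condition. -/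
theorem statement1 {X : Type*} [MeasurableSpace X] (S : SHT X)
    (δ : ℝ) (hδ : δ ∈ Set.Ioo (0:ℝ) 1)
    (C₀ ν a η : ℝ) (hC₀ : 0 < C₀) (hν : 0 < ν) (ha : 0 < a)
    (hη : η ∈ Set.Ioc (0:ℝ) 1)
    (γ : ℝ) (hγ : 0 < γ) :
    ∃ C > (0:ℝ), ∀ (k : ℤ) (y₀ : X) (ψ : X → ℝ),
      (∀ x, |ψ x| ≤ C₀ / Real.sqrt (S.V y₀ (δ ^ k)) *
          Real.exp (-ν * (S.d y₀ x / δ ^ k) ^ a)) →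
      (∀ x y, S.d x y ≤ δ ^ k →
        |ψ x - ψ y| ≤ C₀ / Real.sqrt (S.V y₀ (δ ^ k)) *
          (S.d x y / δ ^ k) ^ η * Real.exp (-ν * (S.d y₀ x / δ ^ k) ^ a)) →
      ∀ x y, S.d x y ≤ (2 * S.A0)⁻¹ * (δ ^ k + S.d x y₀) →
        |ψ x - ψ y| / Real.sqrt (S.V y₀ (δ ^ k)) ≤
          C * (S.d x y / (δ ^ k + S.d x y₀)) ^ η *
            (S.V y₀ (δ ^ k) + S.Vd x y₀)⁻¹ *
            (δ ^ k / (δ ^ k + S.d x y₀)) ^ γ := by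
  obtain ⟨hδ0, hδ1⟩ := hδ
  obtain ⟨hη0, hη1⟩ := hη
  have hA1 := S.one_le_A0
  have hA0 : (0:ℝ) < S.A0 := by linarith
  have hdim := S.dim_pos
  set β : ℝ := S.dim + η + γ with hβdef
  have hβ : 0 < β := by rw [hβdef]; linarith
  have h4A : (0:ℝ) < (4 * S.A0) ^ a := Real.rpow_pos_of_pos (by linarith) a
  obtain ⟨M₁, hM₁, hM₁'⟩ := poly_le_exp β ν a hβ hν ha
  obtain ⟨M₂, hM₂, hM₂'⟩ := poly_le_exp β (ν / (4 * S.A0) ^ a) a hβ (by positivity) ha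
  have hCd1 : (0:ℝ) < max S.Cdim 1 := lt_max_of_lt_right one_pos
  have hmax1 : (1:ℝ) ≤ max S.Cdim 1 := le_max_right _ _
  have h2A : (0:ℝ) < (2 * S.A0) ^ S.dim := Real.rpow_pos_of_pos (by linarith) _
  set K : ℝ := 1 + max S.Cdim 1 * (2 * S.A0) ^ S.dim with hKdef
  have hK : 0 < K := by
    have := mul_pos hCd1 h2A
    rw [hKdef]; linarith
  have h3β : (0:ℝ) < (3:ℝ) ^ β := Real.rpow_pos_of_pos (by norm_num) β
  set M : ℝ := M₁ + ((3:ℝ) ^ β + M₂) with hMdef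
  have hM : 0 < M := by rw [hMdef]; linarith
  refine ⟨C₀ * K * M, by positivity, ?_⟩
  intro k y₀ ψ h1 h2 x y hxy
  set r : ℝ := δ ^ k with hrdef
  have hr : 0 < r := by rw [hrdef]; exact zpow_pos hδ0 k
  have hD : 0 ≤ S.d x y₀ := S.d_nonneg x y₀
  set D : ℝ := S.d x y₀ with hDdef
  set Q : ℝ := r + D with hQdef
  have hQ : 0 < Q := by rw [hQdef]; linarith
  have ht0 : 0 ≤ S.d x y := S.d_nonneg x y
  have hsymm : S.d y₀ x = D := by rw [hDdef, S.d_symm]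
  have hVr : 0 < S.V y₀ r :=
    ENNReal.toReal_pos (S.vol_pos y₀ r hr).ne' (S.vol_lt_top y₀ r hr).ne
  have hVd0 : 0 ≤ S.Vd x y₀ := ENNReal.toReal_nonneg
  have hsq : 0 < Real.sqrt (S.V y₀ r) := Real.sqrt_pos.mpr hVr
  have hQr1 : 1 ≤ Q / r := by rw [le_div_iff₀ hr, hQdef]; linarith
  have hQr0 : 0 < Q / r := div_pos hQ hr
  have hQrdim : 1 ≤ (Q / r) ^ S.dim := Real.one_le_rpow hQr1 hdim.le
  have hQrD : Q / r = 1 + D / r := by rw [hQdef]; field_simp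
  -- Volume comparison
  have hRHSfacts : 1 ≤ (2 * S.A0) ^ S.dim := Real.one_le_rpow (by linarith) hdim.le
  have hVd : S.Vd x y₀ ≤ max S.Cdim 1 * (2 * S.A0) ^ S.dim * ((Q / r) ^ S.dim * S.V y₀ r) := by
    rcases ((eq_or_lt_of_le hD).imp Eq.symm id) with hD0 | hD0
    · have hempty : {z | S.d x z < D} = (∅ : Set X) := by
        apply Set.eq_empty_iff_forall_notMem.mpr
        intro z hz
        simp only [Set.mem_setOf_eq] at hz
        have := S.d_nonneg x z
        rw [hDdef] at hD0
        linarith [hD0.le]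
      have hVdz : S.Vd x y₀ = 0 := by
        show (S.μ {z | S.d x z < D}).toReal = 0
        rw [hempty]; simp
      rw [hVdz]; positivity
    · have h2AD : 0 < 2 * S.A0 * D := by positivity
      have hsub : S.μ {z | S.d x z < D} ≤ S.μ {z | S.d y₀ z < 2 * S.A0 * D} := by
        apply measure_mono
        intro z hz
        simp only [Set.mem_setOf_eq] at hz ⊢
        have htri := S.d_triangle y₀ z x
        rw [hsymm] at htri
        have hmul : S.A0 * S.d x z < S.A0 * D := by
          exact mul_lt_mul_of_pos_left hz hA0
        linarith [htri, hmul]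
      have h1' : S.Vd x y₀ ≤ (S.μ {z | S.d y₀ z < 2 * S.A0 * D}).toReal := by
        show (S.μ {z | S.d x z < D}).toReal ≤ _
        exact ENNReal.toReal_mono (S.vol_lt_top y₀ (2 * S.A0 * D) h2AD).ne hsub
      rcases le_or_gt (2 * S.A0 * D) r with hcase | hcase
      · have h2' : S.μ {z | S.d y₀ z < 2 * S.A0 * D} ≤ S.μ {z | S.d y₀ z < r} :=
          measure_mono (fun z hz => lt_of_lt_of_le hz hcase)
        have h3' : (S.μ {z | S.d y₀ z < 2 * S.A0 * D}).toReal ≤ S.V y₀ r :=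
          ENNReal.toReal_mono (S.vol_lt_top y₀ r hr).ne h2'
        have hge : S.V y₀ r ≤ max S.Cdim 1 * (2 * S.A0) ^ S.dim * ((Q / r) ^ S.dim * S.V y₀ r) := by
          calc S.V y₀ r = 1 * 1 * (1 * S.V y₀ r) := by ring
            _ ≤ max S.Cdim 1 * (2 * S.A0) ^ S.dim * ((Q / r) ^ S.dim * S.V y₀ r) := by
                gcongr <;> first | exact hmax1 | exact hRHSfacts | exact hQrdim | exact hVr.le
        linarith
      · have hlam1 : 1 ≤ 2 * S.A0 * D / r := (one_le_div hr).mpr hcase.le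
        have hupper := S.upperDim y₀ r (2 * S.A0 * D / r) hr hlam1
        have hlr : 2 * S.A0 * D / r * r = 2 * S.A0 * D := by field_simp
        rw [hlr] at hupper
        have hlam_rpow : (2 * S.A0 * D / r) ^ S.dim ≤ (2 * S.A0) ^ S.dim * (Q / r) ^ S.dim := by
          have hDQ : D ≤ Q := by rw [hQdef]; linarith
          have h5 : 2 * S.A0 * D / r ≤ 2 * S.A0 * (Q / r) := by
            have heq : 2 * S.A0 * (Q / r) = 2 * S.A0 * Q / r := by ring
            rw [heq]
            gcongr
          calc (2 * S.A0 * D / r) ^ S.dim ≤ (2 * S.A0 * (Q / r)) ^ S.dim :=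
              Real.rpow_le_rpow (by positivity) h5 hdim.le
            _ = (2 * S.A0) ^ S.dim * (Q / r) ^ S.dim := Real.mul_rpow (by linarith) hQr0.le
        have hCd : S.Cdim ≤ max S.Cdim 1 := le_max_left _ _
        have h0 : 0 ≤ (2 * S.A0 * D / r) ^ S.dim := Real.rpow_nonneg (by positivity) _
        calc S.Vd x y₀ ≤ (S.μ {z | S.d y₀ z < 2 * S.A0 * D}).toReal := h1'
          _ ≤ S.Cdim * (2 * S.A0 * D / r) ^ S.dim * S.V y₀ r := hupper
          _ ≤ max S.Cdim 1 * (2 * S.A0 * D / r) ^ S.dim * S.V y₀ r := by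
              have hhint := mul_nonneg (mul_nonneg (sub_nonneg.mpr hCd) h0) hVr.le
              linarith [hhint]
          _ ≤ max S.Cdim 1 * ((2 * S.A0) ^ S.dim * (Q / r) ^ S.dim) * S.V y₀ r := by
              have hhint := mul_le_mul_of_nonneg_left
                (mul_le_mul_of_nonneg_right hlam_rpow hVr.le) hCd1.le
              linarith [hhint]
          _ = max S.Cdim 1 * (2 * S.A0) ^ S.dim * ((Q / r) ^ S.dim * S.V y₀ r) := by ring
  have hVol : S.V y₀ r + S.Vd x y₀ ≤ K * ((Q / r) ^ S.dim * S.V y₀ r) := by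
    have h1' : S.V y₀ r ≤ (Q / r) ^ S.dim * S.V y₀ r := by
      have := mul_le_mul_of_nonneg_right hQrdim hVr.le
      linarith
    rw [hKdef]
    linarith [hVd, h1']
  rcases ((eq_or_lt_of_le ht0).imp Eq.symm id) with ht | ht
  · -- d x y = 0, so x = y
    have hxy0 : x = y := (S.d_eq_zero_iff x y).mp ht
    subst hxy0
    have hdz : S.d x x = 0 := (S.d_eq_zero_iff x x).mpr rfl
    rw [sub_self, abs_zero, zero_div, hdz, zero_div, Real.zero_rpow hη0.ne']
    simp
  · -- main case : d x y > 0
    have hone_div : 0 < S.d x y / r := div_pos ht hr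
    have he₁ : Real.exp (-ν * (D / r) ^ a) * (Q / r) ^ β ≤ M₁ := by
      have h := hM₁' (D / r) (by positivity)
      have h' := exp_cancel h
      rw [hQrD, neg_mul]
      exact h'
    have hEex : ∃ E : ℝ, 0 ≤ E ∧
        |ψ x - ψ y| ≤ C₀ / Real.sqrt (S.V y₀ r) * ((S.d x y / r) ^ η * E) ∧
        E * (Q / r) ^ β ≤ M := by
      rcases le_or_gt (S.d x y) r with hcase | hcase
      · refine ⟨Real.exp (-ν * (D / r) ^ a), (Real.exp_pos _).le, ?_, ?_⟩
        · have hh := h2 x y hcase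
          rw [hsymm] at hh
          rw [← mul_assoc]
          exact hh
        · calc Real.exp (-ν * (D / r) ^ a) * (Q / r) ^ β ≤ M₁ := he₁
            _ ≤ M := by rw [hMdef]; linarith
      · refine ⟨Real.exp (-ν * (D / r) ^ a) + Real.exp (-ν * (S.d y₀ y / r) ^ a),
          by positivity, ?_, ?_⟩
        · have hx' := h1 x
          rw [hsymm] at hx'
          have hy' := h1 y
          have habs : |ψ x - ψ y| ≤ |ψ x| + |ψ y| := by
            rw [sub_eq_add_neg]
            exact (abs_add_le _ _).trans (by rw [abs_neg])
          have hone : 1 ≤ (S.d x y / r) ^ η :=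
            Real.one_le_rpow ((one_le_div hr).mpr hcase.le) hη0.le
          have hcs : 0 ≤ C₀ / Real.sqrt (S.V y₀ r) := by positivity
          calc |ψ x - ψ y| ≤ |ψ x| + |ψ y| := habs
            _ ≤ C₀ / Real.sqrt (S.V y₀ r) * Real.exp (-ν * (D / r) ^ a) +
                C₀ / Real.sqrt (S.V y₀ r) * Real.exp (-ν * (S.d y₀ y / r) ^ a) :=
                  add_le_add hx' hy'
            _ = C₀ / Real.sqrt (S.V y₀ r) *
                (1 * (Real.exp (-ν * (D / r) ^ a) + Real.exp (-ν * (S.d y₀ y / r) ^ a))) := by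
                  ring
            _ ≤ C₀ / Real.sqrt (S.V y₀ r) * ((S.d x y / r) ^ η *
                (Real.exp (-ν * (D / r) ^ a) + Real.exp (-ν * (S.d y₀ y / r) ^ a))) := by
                  apply mul_le_mul_of_nonneg_left _ hcs
                  apply mul_le_mul_of_nonneg_right hone (by positivity)
        · have he₂ : Real.exp (-ν * (S.d y₀ y / r) ^ a) * (Q / r) ^ β ≤ (3:ℝ) ^ β + M₂ := by
            rcases le_or_gt D (2 * r) with hc | hc
            · have hQr3 : Q / r ≤ 3 := by rw [div_le_iff₀ hr, hQdef]; linarith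
              have h3' : (Q / r) ^ β ≤ (3:ℝ) ^ β := Real.rpow_le_rpow hQr0.le hQr3 hβ.le
              have hexple : Real.exp (-ν * (S.d y₀ y / r) ^ a) ≤ 1 := by
                rw [show (1:ℝ) = Real.exp 0 from (Real.exp_zero).symm]
                apply Real.exp_le_exp.mpr
                have h00 : 0 ≤ (S.d y₀ y / r) ^ a :=
                  Real.rpow_nonneg (div_nonneg (S.d_nonneg y₀ y) hr.le) a
                have := mul_nonneg hν.le h00
                linarith
              calc Real.exp (-ν * (S.d y₀ y / r) ^ a) * (Q / r) ^ β
                  ≤ 1 * (3:ℝ) ^ β :=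
                    mul_le_mul hexple h3' (Real.rpow_nonneg hQr0.le β) zero_le_one
                _ = (3:ℝ) ^ β := one_mul _
                _ ≤ (3:ℝ) ^ β + M₂ := by linarith
            · have hyy : D / (4 * S.A0) ≤ S.d y₀ y := by
                have htri := S.d_triangle x y₀ y
                have hsym2 : S.d y y₀ = S.d y₀ y := S.d_symm y y₀
                rw [hsym2] at htri
                have hkey : D ≤ S.A0 * S.d y₀ y + Q / 2 := by
                  have ha1 : S.A0 * S.d x y ≤ S.A0 * ((2 * S.A0)⁻¹ * Q) :=
                    mul_le_mul_of_nonneg_left hxy hA0.le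
                  have ha2 : S.A0 * ((2 * S.A0)⁻¹ * Q) = Q / 2 := by field_simp
                  linarith [htri, ha1, ha2]
                rw [div_le_iff₀ (by linarith : (0:ℝ) < 4 * S.A0)]
                have hQr' : Q = r + D := hQdef
                linarith [S.d_nonneg y₀ y, hkey, hc]
              have hd0 : (0:ℝ) ≤ S.d y₀ y := S.d_nonneg y₀ y
              have h5 : D / (4 * S.A0) / r ≤ S.d y₀ y / r := by gcongr
              have h5' : (D / (4 * S.A0) / r) ^ a ≤ (S.d y₀ y / r) ^ a :=
                Real.rpow_le_rpow (by positivity) h5 ha.le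
              have h6 : D / (4 * S.A0) / r = (D / r) / (4 * S.A0) := by ring
              have h7 : ((D / r) / (4 * S.A0)) ^ a = (D / r) ^ a / (4 * S.A0) ^ a :=
                Real.div_rpow (by positivity) (by linarith) a
              have h8 : Real.exp (-ν * (S.d y₀ y / r) ^ a) ≤
                  Real.exp (-(ν / (4 * S.A0) ^ a * (D / r) ^ a)) := by
                apply Real.exp_le_exp.mpr
                rw [h6, h7] at h5'
                have h5'' := mul_le_mul_of_nonneg_left h5' hν.le
                have heq2 : ν * ((D / r) ^ a / (4 * S.A0) ^ a)
                    = ν / (4 * S.A0) ^ a * (D / r) ^ a := by ring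
                linarith [h5'']
              have h9 := exp_cancel (hM₂' (D / r) (by positivity))
              calc Real.exp (-ν * (S.d y₀ y / r) ^ a) * (Q / r) ^ β
                  ≤ Real.exp (-(ν / (4 * S.A0) ^ a * (D / r) ^ a)) * (Q / r) ^ β :=
                    mul_le_mul_of_nonneg_right h8 (Real.rpow_nonneg hQr0.le β)
                _ ≤ M₂ := by rw [hQrD]; exact h9
                _ ≤ (3:ℝ) ^ β + M₂ := by linarith
          calc (Real.exp (-ν * (D / r) ^ a) + Real.exp (-ν * (S.d y₀ y / r) ^ a)) * (Q / r) ^ β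
              = Real.exp (-ν * (D / r) ^ a) * (Q / r) ^ β +
                Real.exp (-ν * (S.d y₀ y / r) ^ a) * (Q / r) ^ β := by ring
            _ ≤ M₁ + ((3:ℝ) ^ β + M₂) := add_le_add he₁ he₂
            _ = M := hMdef.symm
    obtain ⟨E, hE0, hEbd, hEM⟩ := hEex
    -- step 1
    have step1 : |ψ x - ψ y| / Real.sqrt (S.V y₀ r) ≤
        C₀ / S.V y₀ r * ((S.d x y / r) ^ η * E) := by
      calc |ψ x - ψ y| / Real.sqrt (S.V y₀ r)
          = |ψ x - ψ y| * (Real.sqrt (S.V y₀ r))⁻¹ := div_eq_mul_inv _ _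
        _ ≤ C₀ / Real.sqrt (S.V y₀ r) * ((S.d x y / r) ^ η * E) * (Real.sqrt (S.V y₀ r))⁻¹ :=
            mul_le_mul_of_nonneg_right hEbd (inv_nonneg.mpr hsq.le)
        _ = C₀ * ((S.d x y / r) ^ η * E) / (Real.sqrt (S.V y₀ r) * Real.sqrt (S.V y₀ r)) := by
            ring
        _ = C₀ / S.V y₀ r * ((S.d x y / r) ^ η * E) := by
            rw [Real.mul_self_sqrt hVr.le]; ring
    -- algebraic facts
    have hsplit : (S.d x y / Q) ^ η = (S.d x y / r) ^ η * (r / Q) ^ η := by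
      rw [← Real.mul_rpow (by positivity) (by positivity)]
      congr 1
      field_simp
    have hrQ : r / Q = (Q / r)⁻¹ := by rw [inv_div]
    have h7 : (r / Q) ^ η * (r / Q) ^ γ = ((Q / r) ^ (η + γ))⁻¹ := by
      rw [hrQ, Real.inv_rpow hQr0.le, Real.inv_rpow hQr0.le, ← mul_inv,
        ← Real.rpow_add hQr0]
    have hpow : (Q / r) ^ S.dim * (Q / r) ^ (η + γ) = (Q / r) ^ β := by
      rw [← Real.rpow_add hQr0]
      congr 1
      rw [hβdef]; ring
    have h8 : E * (Q / r) ^ S.dim ≤ M * ((Q / r) ^ (η + γ))⁻¹ := by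
      rw [← div_eq_mul_inv, le_div_iff₀ (Real.rpow_pos_of_pos hQr0 _)]
      calc E * (Q / r) ^ S.dim * (Q / r) ^ (η + γ) = E * (Q / r) ^ β := by
            rw [mul_assoc, hpow]
        _ ≤ M := hEM
    have h9 : E * (Q / r) ^ S.dim ≤ M * ((r / Q) ^ η * (r / Q) ^ γ) := by
      rw [h7]; exact h8
    have hVV : 0 < S.V y₀ r + S.Vd x y₀ := by linarith
    have htη : 0 < (S.d x y / r) ^ η := Real.rpow_pos_of_pos hone_div η
    have hquot : C₀ * E * (S.V y₀ r + S.Vd x y₀) ≤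
        C₀ * K * M * ((r / Q) ^ η * (r / Q) ^ γ) * S.V y₀ r := by
      calc C₀ * E * (S.V y₀ r + S.Vd x y₀)
          ≤ C₀ * E * (K * ((Q / r) ^ S.dim * S.V y₀ r)) :=
            mul_le_mul_of_nonneg_left hVol (by positivity)
        _ = C₀ * K * (E * (Q / r) ^ S.dim) * S.V y₀ r := by ring
        _ ≤ C₀ * K * (M * ((r / Q) ^ η * (r / Q) ^ γ)) * S.V y₀ r :=
            mul_le_mul_of_nonneg_right
              (mul_le_mul_of_nonneg_left h9 (by positivity)) hVr.le
        _ = C₀ * K * M * ((r / Q) ^ η * (r / Q) ^ γ) * S.V y₀ r := by ring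
    have step2 : C₀ / S.V y₀ r * ((S.d x y / r) ^ η * E) ≤
        C₀ * K * M * (S.d x y / Q) ^ η * (S.V y₀ r + S.Vd x y₀)⁻¹ * (r / Q) ^ γ := by
      calc C₀ / S.V y₀ r * ((S.d x y / r) ^ η * E)
          = C₀ * E * (S.d x y / r) ^ η / S.V y₀ r := by ring
        _ ≤ C₀ * K * M * ((r / Q) ^ η * (r / Q) ^ γ) * (S.d x y / r) ^ η /
              (S.V y₀ r + S.Vd x y₀) := by
            rw [div_le_div_iff₀ hVr hVV]
            have hhint := mul_le_mul_of_nonneg_right hquot htη.le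
            linarith [hhint]
        _ = C₀ * K * M * ((S.d x y / r) ^ η * (r / Q) ^ η) *
              (S.V y₀ r + S.Vd x y₀)⁻¹ * (r / Q) ^ γ := by ring
        _ = C₀ * K * M * (S.d x y / Q) ^ η * (S.V y₀ r + S.Vd x y₀)⁻¹ * (r / Q) ^ γ := by
            rw [hsplit]
    exact step1.trans step2
end

section
/- Let (X,d,μ) be a space of homogeneous type with quasi-triangle constant A₀ and upper dimension ω, and fix γ > 0, η > 0. There is a constant C, depending only on γ, η, A₀, the doubling constant and ω, with the following property. Let 0 < r ≤ s, x₁, x₂ ∈ X, and let u, v : X → ℝ be integrable functions such that: ∫_X u dμ = 0; |u(x)| ≤ (V_r(x₁) + V(x₁,x))^(−1) (r/(r + d(x₁,x)))^(γ+η) for all x; |v(x)| ≤ (V_s(x₂) + V(x₂,x))^(−1) (s/(s + d(x₂,x)))^(γ+η) for all x; and |v(x) − v(x′)| ≤ (d(x,x′)/(s + d(x₂,x)))^η (V_s(x₂) + V(x₂,x))^(−1) (s/(s + d(x₂,x)))^(γ+η) whenever d(x,x′) ≤ (2A₀)^(−1)(s + d(x₂,x)). Then |∫_X u(x) v(x)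 dμ(x)| ≤ C (r/s)^η · (V_s(x₁) + V_s(x₂) + V(x₁,x₂))^(−1) · (s/(s + d(x₁,x₂)))^γ. -/
open MeasureTheory Real
open scoped ENNReal

namespace SHT

variable {X : Type*} [MeasurableSpace X] (S : SHT X)

lemma V_nonneg (x : X) (r : ℝ) : 0 ≤ S.V x r := ENNReal.toReal_nonneg

lemma Vd_nonneg (x y : X) : 0 ≤ S.Vd x y := ENNReal.toReal_nonneg

lemma V_pos (x : X) {r : ℝ} (h : 0 < r) : 0 < S.V x r :=
  ENNReal.toReal_pos (S.vol_pos x r h).ne' (S.vol_lt_top x r h).ne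

lemma V_le_of_subset {x z : X} {a b : ℝ} (hb : 0 < b)
    (h : {y | S.d x y < a} ⊆ {y | S.d z y < b}) : S.V x a ≤ S.V z b :=
  ENNReal.toReal_mono (S.vol_lt_top z b hb).ne (measure_mono h)

lemma V_mono (x : X) {a b : ℝ} (hb : 0 < b) (hab : a ≤ b) : S.V x a ≤ S.V x b :=
  S.V_le_of_subset hb (fun y hy => lt_of_lt_of_le hy hab)

lemma doubling' (x : X) {r : ℝ} (h : 0 < r) : S.V x (2 * r) ≤ max S.Cmu 1 * S.V x r :=
  (S.doubling x r h).trans (mul_le_mul_of_nonneg_right (le_max_left _ _) (S.V_nonneg x r))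

lemma V_scale (z : X) {ρ R Λ : ℝ} (hρ : 0 < ρ) (h1 : ρ ≤ R) (h2 : R ≤ Λ * ρ) :
    S.V z R ≤ max S.Cdim 1 * Λ ^ S.dim * S.V z ρ := by
  have hΛρ : 1 ≤ R / ρ := (one_le_div hρ).2 h1
  have hR : R = (R / ρ) * ρ := (div_mul_cancel₀ _ hρ.ne').symm
  have h3 := S.upperDim z ρ (R / ρ) hρ hΛρ
  have h4 : (R / ρ : ℝ) ^ S.dim ≤ Λ ^ S.dim :=
    Real.rpow_le_rpow (by linarith) ((div_le_iff₀ hρ).2 h2) S.dim_pos.le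
  have h5 : (0:ℝ) ≤ (R / ρ) ^ S.dim := Real.rpow_nonneg (by linarith) _
  have h6 : (0:ℝ) ≤ max S.Cdim 1 := le_trans zero_le_one (le_max_right _ _)
  calc S.V z R = S.V z ((R / ρ) * ρ) := by rw [← hR]
    _ ≤ S.Cdim * (R / ρ) ^ S.dim * S.V z ρ := h3
    _ ≤ max S.Cdim 1 * Λ ^ S.dim * S.V z ρ := by
        apply mul_le_mul_of_nonneg_right _ (S.V_nonneg z ρ)
        calc S.Cdim * (R / ρ) ^ S.dim ≤ max S.Cdim 1 * (R / ρ) ^ S.dim :=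
              mul_le_mul_of_nonneg_right (le_max_left _ _) h5
          _ ≤ max S.Cdim 1 * Λ ^ S.dim := mul_le_mul_of_nonneg_left h4 h6

/-- The `L¹` estimate for functions dominated by a bump: if
`|f x| ≤ M ((V_ρ(x₀) + V(x₀,x))⁻¹ (ρ/(ρ+d(x₀,x)))^α)` then `∫ |f| ≤ C M`. -/
lemma bump_L1 {α : ℝ} (hα : 0 < α) :
    ∃ C > (0:ℝ), ∀ (ρ : ℝ) (x₀ : X) (M : ℝ) (f : X → ℝ), 0 < ρ → 0 ≤ M →
      Integrable f S.μ →
      (∀ x, |f x| ≤ M * ((S.V x₀ ρ + S.Vd x₀ x)⁻¹ * (ρ / (ρ + S.d x₀ x)) ^ α)) →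
      ∫ x, |f x| ∂S.μ ≤ C * M := by
  have hq0 : (0:ℝ) < 2 ^ (-α) := Real.rpow_pos_of_pos two_pos _
  have hq1 : (2:ℝ) ^ (-α) < 1 :=
    Real.rpow_lt_one_of_one_lt_of_neg one_lt_two (neg_lt_zero.2 hα)
  set q : ℝ := 2 ^ (-α) with hqdef
  have hq' : ((2:ℝ)⁻¹) ^ α = q := by
    rw [Real.inv_rpow (by norm_num : (0:ℝ) ≤ 2), hqdef, Real.rpow_neg (by norm_num : (0:ℝ) ≤ 2)]
  set Cm : ℝ := max S.Cmu 1 with hCm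
  have hCm1 : (1:ℝ) ≤ Cm := le_max_right _ _
  have hCm0 : (0:ℝ) < Cm := lt_of_lt_of_le one_pos hCm1
  have h1q : (0:ℝ) < 1 - q := by linarith
  refine ⟨Cm * (1 - q)⁻¹, mul_pos hCm0 (inv_pos.2 h1q), ?_⟩
  intro ρ x₀ M f hρ hM hf hfb
  rcases hM.eq_or_lt with hM0 | hM0
  · -- M = 0 : f vanishes
    have hf0 : ∀ x, f x = 0 := by
      intro x
      have := hfb x
      rw [← hM0, zero_mul] at this
      exact abs_eq_zero.1 (le_antisymm this (abs_nonneg _))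
    have hz : ∫ x, |f x| ∂S.μ = 0 := by simp [hf0]
    rw [hz, ← hM0, mul_zero]
  -- main case M > 0
  have hBpos : ∀ k : ℕ, (0:ℝ) < 2 ^ k * ρ := fun k => mul_pos (pow_pos two_pos k) hρ
  set Vk : ℕ → ℝ := fun k => S.V x₀ (2 ^ k * ρ) with hVk
  have hVkpos : ∀ k, 0 < Vk k := fun k => S.V_pos x₀ (hBpos k)
  have hVkd : ∀ k, Vk (k + 1) ≤ Cm * Vk k := by
    intro k
    have h2 : (2:ℝ) * (2 ^ k * ρ) = 2 ^ (k+1) * ρ := by ring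
    have h3 := S.doubling' x₀ (hBpos k)
    rw [h2] at h3
    exact h3
  have hVkmono : ∀ k, Vk 0 ≤ Vk k := by
    intro k
    apply S.V_mono x₀ (hBpos k)
    have h1 : (1:ℝ) ≤ 2 ^ k := one_le_pow₀ (by norm_num)
    nlinarith [hρ.le]
  set t : ℕ → ℝ := fun k => M * q ^ k / Vk k with ht
  have htpos : ∀ k, 0 < t k := fun k => div_pos (mul_pos hM0 (pow_pos hq0 k)) (hVkpos k)
  have htV : ∀ k, t k * Vk (k + 1) ≤ M * Cm * q ^ k := by
    intro k
    have hne := (hVkpos k).ne'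
    have h1 : t k * Vk (k + 1) ≤ t k * (Cm * Vk k) :=
      mul_le_mul_of_nonneg_left (hVkd k) (htpos k).le
    have h2 : t k * (Cm * Vk k) = M * Cm * q ^ k := by
      simp only [ht]
      field_simp
    linarith
  -- |f| ≤ t 0 everywhere
  have hVk0 : Vk 0 = S.V x₀ ρ := by simp [hVk]
  have h0 : ∀ x, |f x| ≤ t 0 := by
    intro x
    have hd0 := S.d_nonneg x₀ x
    have h2 : (S.V x₀ ρ + S.Vd x₀ x)⁻¹ ≤ (S.V x₀ ρ)⁻¹ :=
      inv_anti₀ (S.V_pos x₀ hρ) (le_add_of_nonneg_right (S.Vd_nonneg _ _))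
    have h3 : (ρ / (ρ + S.d x₀ x)) ^ α ≤ 1 :=
      Real.rpow_le_one (div_nonneg hρ.le (by linarith))
        ((div_le_one (by linarith)).2 (by linarith)) hα.le
    calc |f x| ≤ M * ((S.V x₀ ρ + S.Vd x₀ x)⁻¹ * (ρ / (ρ + S.d x₀ x)) ^ α) := hfb x
      _ ≤ M * ((S.V x₀ ρ)⁻¹ * 1) := by
          apply mul_le_mul_of_nonneg_left _ hM
          exact mul_le_mul h2 h3 (Real.rpow_nonneg (div_nonneg hρ.le (by linarith)) _)
            (inv_nonneg.2 (S.V_nonneg _ _))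
      _ = t 0 := by
          simp only [ht, hVk0]
          rw [mul_one, pow_zero, mul_one, div_eq_mul_inv]
  -- far bound
  have hfar : ∀ (k : ℕ) (x : X), 2 ^ k * ρ ≤ S.d x₀ x → |f x| ≤ t k := by
    intro k x hd
    have hd0 : 0 < S.d x₀ x := lt_of_lt_of_le (hBpos k) hd
    have h1 : Vk k ≤ S.Vd x₀ x := S.V_mono x₀ hd0 hd
    have h2 : (S.V x₀ ρ + S.Vd x₀ x)⁻¹ ≤ (Vk k)⁻¹ := by
      apply inv_anti₀ (hVkpos k)
      exact h1.trans (le_add_of_nonneg_left (S.V_nonneg x₀ ρ))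
    have h3 : (ρ / (ρ + S.d x₀ x)) ^ α ≤ q ^ k := by
      have hb1 : ρ / (ρ + S.d x₀ x) ≤ (2:ℝ)⁻¹ ^ k := by
        rw [div_le_iff₀ (by linarith)]
        have hkey : (2:ℝ)⁻¹ ^ k * (2 ^ k * ρ) = ρ := by
          rw [← mul_assoc, ← mul_pow]
          norm_num
        calc ρ = (2:ℝ)⁻¹ ^ k * (2 ^ k * ρ) := hkey.symm
          _ ≤ (2:ℝ)⁻¹ ^ k * (ρ + S.d x₀ x) := by
              apply mul_le_mul_of_nonneg_left _ (by positivity)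
              linarith
      calc (ρ / (ρ + S.d x₀ x)) ^ α ≤ ((2:ℝ)⁻¹ ^ k) ^ α :=
            Real.rpow_le_rpow (div_nonneg hρ.le (by linarith)) hb1 hα.le
        _ = q ^ k := by
            rw [← Real.rpow_natCast ((2:ℝ)⁻¹) k,
                ← Real.rpow_mul (by norm_num : (0:ℝ) ≤ 2⁻¹),
                mul_comm (k:ℝ) α,
                Real.rpow_mul (by norm_num : (0:ℝ) ≤ 2⁻¹), hq',
                Real.rpow_natCast]
    calc |f x| ≤ M * ((S.V x₀ ρ + S.Vd x₀ x)⁻¹ * (ρ / (ρ + S.d x₀ x)) ^ α) := hfb x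
      _ ≤ M * ((Vk k)⁻¹ * q ^ k) := by
          apply mul_le_mul_of_nonneg_left _ hM
          exact mul_le_mul h2 h3 (Real.rpow_nonneg (div_nonneg hρ.le (by linarith)) _)
            (inv_nonneg.2 (hVkpos k).le)
      _ = t k := by
          simp only [ht]
          rw [div_eq_mul_inv]
          ring
  -- measurable representative
  have hsm := hf.aestronglyMeasurable
  set g := hsm.mk f with hg
  have hgm : StronglyMeasurable g := hsm.stronglyMeasurable_mk
  have hfg : f =ᵐ[S.μ] g := hsm.ae_eq_mk
  have hgmeas : Measurable g := hgm.measurable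
  set E : ℕ → Set X := fun k => {x | t (k + 1) < |g x|} with hE
  have hEm : ∀ k, MeasurableSet (E k) := fun k =>
    measurableSet_lt measurable_const hgmeas.abs
  have hEball : ∀ k, S.μ (E k) ≤ S.μ {y | S.d x₀ y < 2 ^ (k+1) * ρ} := by
    intro k
    have hsub : E k ⊆ {x | t (k + 1) < |f x|} ∪ {x | ¬ f x = g x} := by
      intro x hx
      by_cases hfx : f x = g x
      · left
        show t (k+1) < |f x|
        rw [hfx]
        exact hx
      · right; exact hfx
    have hsub2 : {x | t (k + 1) < |f x|} ⊆ {y | S.d x₀ y < 2 ^ (k+1) * ρ} := by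
      intro x hx
      by_contra hcon
      have hge : 2 ^ (k+1) * ρ ≤ S.d x₀ x := not_lt.1 hcon
      exact absurd hx (not_lt.2 (hfar (k+1) x hge))
    calc S.μ (E k) ≤ S.μ ({x | t (k + 1) < |f x|} ∪ {x | ¬ f x = g x}) := measure_mono hsub
      _ ≤ S.μ {x | t (k + 1) < |f x|} + S.μ {x | ¬ f x = g x} := measure_union_le _ _
      _ = S.μ {x | t (k + 1) < |f x|} := by
          rw [ae_iff.1 hfg, add_zero]
      _ ≤ S.μ {y | S.d x₀ y < 2 ^ (k+1) * ρ} := measure_mono hsub2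
  -- pointwise domination by a sum of indicators
  have hpt : ∀ᵐ x ∂S.μ, ENNReal.ofReal |f x| ≤
      ∑' k, (E k).indicator (fun _ => ENNReal.ofReal (t k)) x := by
    filter_upwards [hfg] with x hfgx
    rcases (abs_nonneg (f x)).eq_or_lt with h | h
    · rw [← h]
      simp
    · have hex : ∃ k, t k < |f x| := by
        obtain ⟨n, hn⟩ := exists_pow_lt_of_lt_one
          (show (0:ℝ) < |f x| * Vk 0 / M from div_pos (mul_pos h (hVkpos 0)) hM0) hq1
        refine ⟨n, ?_⟩
        have h1 : t n ≤ M * q ^ n / Vk 0 :=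
          div_le_div_of_nonneg_left (by positivity) (hVkpos 0) (hVkmono n)
        have h2 : M * q ^ n < |f x| * Vk 0 := by
          rw [lt_div_iff₀ hM0] at hn
          calc M * q ^ n = q ^ n * M := by ring
            _ < |f x| * Vk 0 := hn
        have h3 : M * q ^ n / Vk 0 < |f x| := by
          rw [div_lt_iff₀ (hVkpos 0)]
          exact h2
        linarith
      have hj'pos : Nat.find hex ≠ 0 := by
        intro h0'
        have hspec := Nat.find_spec hex
        rw [h0'] at hspec
        exact absurd hspec (not_lt.2 (h0 x))
      obtain ⟨j, hj⟩ := Nat.exists_eq_succ_of_ne_zero hj'pos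
      have hmem : x ∈ E j := by
        show t (j + 1) < |g x|
        rw [← hfgx]
        have hspec := Nat.find_spec hex
        rw [hj] at hspec
        exact hspec
      have hle : |f x| ≤ t j := by
        have hlt : j < Nat.find hex := by omega
        exact not_lt.1 (Nat.find_min hex hlt)
      calc ENNReal.ofReal |f x| ≤ ENNReal.ofReal (t j) := ENNReal.ofReal_le_ofReal hle
        _ = (E j).indicator (fun _ => ENNReal.ofReal (t j)) x := by
            rw [Set.indicator_of_mem hmem]
        _ ≤ ∑' k, (E k).indicator (fun _ => ENNReal.ofReal (t k)) x := ENNReal.le_tsum j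
  have key : ∫⁻ x, ENNReal.ofReal |f x| ∂S.μ ≤ ENNReal.ofReal (Cm * (1 - q)⁻¹ * M) := by
    calc ∫⁻ x, ENNReal.ofReal |f x| ∂S.μ
        ≤ ∫⁻ x, ∑' k, (E k).indicator (fun _ => ENNReal.ofReal (t k)) x ∂S.μ :=
          lintegral_mono_ae hpt
      _ = ∑' k, ∫⁻ x, (E k).indicator (fun _ => ENNReal.ofReal (t k)) x ∂S.μ :=
          lintegral_tsum (fun k => (measurable_const.indicator (hEm k)).aemeasurable)
      _ = ∑' k, ENNReal.ofReal (t k) * S.μ (E k) := by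
          apply tsum_congr
          intro k
          exact lintegral_indicator_const (hEm k) _
      _ ≤ ∑' k, ENNReal.ofReal (M * Cm * q ^ k) := by
          apply ENNReal.tsum_le_tsum
          intro k
          have hfin : S.μ {y | S.d x₀ y < 2 ^ (k+1) * ρ} ≠ ⊤ :=
            (S.vol_lt_top x₀ _ (hBpos (k+1))).ne
          calc ENNReal.ofReal (t k) * S.μ (E k)
              ≤ ENNReal.ofReal (t k) * S.μ {y | S.d x₀ y < 2 ^ (k+1) * ρ} :=
                mul_le_mul_right (hEball k) _
            _ = ENNReal.ofReal (t k) * ENNReal.ofReal (Vk (k+1)) := by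
                rw [show Vk (k+1) = (S.μ {y | S.d x₀ y < 2 ^ (k+1) * ρ}).toReal from rfl,
                  ENNReal.ofReal_toReal hfin]
            _ = ENNReal.ofReal (t k * Vk (k+1)) := by
                rw [ENNReal.ofReal_mul (htpos k).le]
            _ ≤ ENNReal.ofReal (M * Cm * q ^ k) := ENNReal.ofReal_le_ofReal (htV k)
      _ = ENNReal.ofReal (M * Cm) * ∑' k, (ENNReal.ofReal q) ^ k := by
          rw [← ENNReal.tsum_mul_left]
          apply tsum_congr
          intro k
          rw [← ENNReal.ofReal_pow hq0.le, ← ENNReal.ofReal_mul (mul_nonneg hM hCm0.le)]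
      _ = ENNReal.ofReal (M * Cm) * (1 - ENNReal.ofReal q)⁻¹ := by
          rw [ENNReal.tsum_geometric]
      _ = ENNReal.ofReal (Cm * (1 - q)⁻¹ * M) := by
          rw [← ENNReal.ofReal_one, ← ENNReal.ofReal_sub _ hq0.le,
              ← ENNReal.ofReal_inv_of_pos (by linarith : (0:ℝ) < 1 - q),
              ← ENNReal.ofReal_mul (mul_nonneg hM hCm0.le)]
          congr 1
          ring
  have habs : ∫ x, |f x| ∂S.μ = (∫⁻ x, ENNReal.ofReal |f x| ∂S.μ).toReal :=
    integral_eq_lintegral_of_nonneg_ae (Filter.Eventually.of_forall fun x => abs_nonneg _)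
      hf.abs.aestronglyMeasurable
  rw [habs]
  exact ENNReal.toReal_le_of_le_ofReal
    (mul_nonneg (mul_nonneg hCm0.le (inv_nonneg.2 h1q.le)) hM) key

end SHT

set_option maxHeartbeats 8000000 in
/-- the almost-orthogonality estimate between a function `u`
with cancellation at scale `r` and a Hölder bump `v` at scale `s ≥ r`. -/
theorem statement11 {X : Type*} [MeasurableSpace X] (S : SHT X)
    (γ η : ℝ) (hγ : 0 < γ) (hη : 0 < η) :
    ∃ C > (0:ℝ), ∀ (r s : ℝ) (x₁ x₂ : X) (u v : X → ℝ),
      0 < r → r ≤ s →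
      Integrable u S.μ → Integrable v S.μ →
      (∫ x, u x ∂S.μ = 0) →
      (∀ x, |u x| ≤ (S.V x₁ r + S.Vd x₁ x)⁻¹ * (r / (r + S.d x₁ x)) ^ (γ + η)) →
      (∀ x, |v x| ≤ (S.V x₂ s + S.Vd x₂ x)⁻¹ * (s / (s + S.d x₂ x)) ^ (γ + η)) →
      (∀ x x', S.d x x' ≤ (2 * S.A0)⁻¹ * (s + S.d x₂ x) →
        |v x - v x'| ≤ (S.d x x' / (s + S.d x₂ x)) ^ η *
          (S.V x₂ s + S.Vd x₂ x)⁻¹ * (s / (s + S.d x₂ x)) ^ (γ + η)) →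
      |∫ x, u x * v x ∂S.μ| ≤
        C * (r / s) ^ η * (S.V x₁ s + S.V x₂ s + S.Vd x₁ x₂)⁻¹ *
          (s / (s + S.d x₁ x₂)) ^ γ := by
  classical
  obtain ⟨C₀, hC₀, hbump₀⟩ := S.bump_L1 hγ
  obtain ⟨C₁, hC₁, hbump₁⟩ := S.bump_L1 (add_pos hγ hη)
  have hA1 : 1 ≤ S.A0 := S.one_le_A0
  have hA0 : 0 < S.A0 := lt_of_lt_of_le one_pos hA1
  have h2A : (0:ℝ) < 2 * S.A0 := by linarith
  have hCd1 : (1:ℝ) ≤ max S.Cdim 1 := le_max_right _ _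
  have hCd0 : (0:ℝ) < max S.Cdim 1 := lt_of_lt_of_le one_pos hCd1
  have hp4A : (0:ℝ) < (4 * S.A0) ^ S.dim := Real.rpow_pos_of_pos (by linarith) _
  have hp4A2 : (0:ℝ) < (4 * S.A0 ^ 2) ^ S.dim :=
    Real.rpow_pos_of_pos (by nlinarith) _
  set C₂ : ℝ := 3 * max S.Cdim 1 * (4 * S.A0) ^ S.dim with hC₂def
  set C₃ : ℝ := 3 * max S.Cdim 1 * (4 * S.A0 ^ 2) ^ S.dim with hC₃def
  have hC₂ : 0 < C₂ := by
    rw [hC₂def]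
    exact mul_pos (mul_pos three_pos hCd0) hp4A
  have hC₃ : 0 < C₃ := by
    rw [hC₃def]
    exact mul_pos (mul_pos three_pos hCd0) hp4A2
  have hp2Aη : (0:ℝ) < (2 * S.A0) ^ η := Real.rpow_pos_of_pos h2A _
  have hp2Agη : (0:ℝ) < (2 * S.A0) ^ (γ + η) := Real.rpow_pos_of_pos h2A _
  refine ⟨C₀ * (2 * S.A0) ^ η * C₂ + C₁ * (2 * S.A0) ^ (γ + η) * C₃,
    add_pos (mul_pos (mul_pos hC₀ hp2Aη) hC₂) (mul_pos (mul_pos hC₁ hp2Agη) hC₃), ?_⟩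
  intro r s x₁ x₂ u v hr hrs hu_int hv_int hu0 hu hv hvH
  have hs : 0 < s := hr.trans_le hrs
  set D := S.d x₁ x₂ with hDdef
  have hD0 : 0 ≤ D := S.d_nonneg _ _
  have hsD : 0 < s + D := by linarith
  have hDsymm : S.d x₂ x₁ = D := by rw [hDdef]; exact S.d_symm x₂ x₁
  set T := (2 * S.A0)⁻¹ * (s + D) with hTdef
  have hT0 : 0 < T := by
    rw [hTdef]
    exact mul_pos (inv_pos.2 h2A) hsD
  set Vtot := S.V x₁ s + S.V x₂ s + S.Vd x₁ x₂ with hVtotdef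
  have hVtot : 0 < Vtot := by
    rw [hVtotdef]
    have h1 := S.V_pos x₁ hs
    have h2 := S.V_nonneg x₂ s
    have h3 := S.Vd_nonneg x₁ x₂
    linarith
  set Vsum := S.V x₂ s + S.Vd x₂ x₁ with hVsumdef
  have hVsum : 0 < Vsum := by
    rw [hVsumdef]
    have h1 := S.V_pos x₂ hs
    have h2 := S.Vd_nonneg x₂ x₁
    linarith
  have hVtotinv : (0:ℝ) < Vtot⁻¹ := inv_pos.2 hVtot
  -- basic ratio facts
  have hrs0 : (0:ℝ) < r / s := div_pos hr hs
  have hss0 : (0:ℝ) < s / (s + D) := div_pos hs hsD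
  have hss1 : s / (s + D) ≤ 1 := (div_le_one hsD).2 (by linarith)
  have hρ1 : (0:ℝ) < (r / s) ^ η := Real.rpow_pos_of_pos hrs0 _
  have hσγ : (0:ℝ) < (s / (s + D)) ^ γ := Real.rpow_pos_of_pos hss0 _
  have hση : (0:ℝ) < (s / (s + D)) ^ η := Real.rpow_pos_of_pos hss0 _
  have hση1 : (s / (s + D)) ^ η ≤ 1 := Real.rpow_le_one hss0.le hss1 hη.le
  -- ball inclusions (center x₂)
  have hR0 : (0:ℝ) < 2 * S.A0 * (s + D) := mul_pos h2A hsD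
  have hsub1 : {y | S.d x₁ y < s} ⊆ {y | S.d x₂ y < 2 * S.A0 * (s + D)} := by
    intro y hy
    simp only [Set.mem_setOf_eq] at hy ⊢
    have h1 := S.d_triangle x₂ y x₁
    rw [hDsymm] at h1
    have h2 := S.d_nonneg x₁ y
    nlinarith [mul_lt_mul_of_pos_left hy hA0, mul_nonneg hA0.le hD0, mul_nonneg hA0.le hs.le]
  have hsub2 : {y | S.d x₂ y < s} ⊆ {y | S.d x₂ y < 2 * S.A0 * (s + D)} := by
    intro y hy
    simp only [Set.mem_setOf_eq] at hy ⊢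
    nlinarith [mul_nonneg hA0.le hD0, mul_nonneg (sub_nonneg.2 hA1) hs.le]
  have hsub3 : {y | S.d x₁ y < D} ⊆ {y | S.d x₂ y < 2 * S.A0 * (s + D)} := by
    intro y hy
    simp only [Set.mem_setOf_eq] at hy ⊢
    have h1 := S.d_triangle x₂ y x₁
    rw [hDsymm] at h1
    have h2 := S.d_nonneg x₁ y
    nlinarith [mul_lt_mul_of_pos_left hy hA0, mul_nonneg hA0.le hD0, mul_nonneg hA0.le hs.le]
  -- ball inclusions (center x₁)
  have hsub1' : {y | S.d x₁ y < s} ⊆ {y | S.d x₁ y < 2 * S.A0 * (s + D)} := by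
    intro y hy
    simp only [Set.mem_setOf_eq] at hy ⊢
    nlinarith [mul_nonneg hA0.le hD0, mul_nonneg (sub_nonneg.2 hA1) hs.le]
  have hsub2' : {y | S.d x₂ y < s} ⊆ {y | S.d x₁ y < 2 * S.A0 * (s + D)} := by
    intro y hy
    simp only [Set.mem_setOf_eq] at hy ⊢
    have h1 := S.d_triangle x₁ y x₂
    rw [← hDdef] at h1
    have h2 := S.d_nonneg x₂ y
    nlinarith [mul_lt_mul_of_pos_left hy hA0, mul_nonneg hA0.le hD0, mul_nonneg hA0.le hs.le]
  have hsub3' : {y | S.d x₁ y < D} ⊆ {y | S.d x₁ y < 2 * S.A0 * (s + D)} := by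
    intro y hy
    simp only [Set.mem_setOf_eq] at hy ⊢
    nlinarith [mul_nonneg hA0.le hs.le, mul_nonneg (sub_nonneg.2 hA1) hD0]
  have hVd12 : S.Vd x₁ x₂ = S.V x₁ D := by rw [SHT.Vd, hDdef]
  have hVtot_le2 : Vtot ≤ 3 * S.V x₂ (2 * S.A0 * (s + D)) := by
    have e1 := S.V_le_of_subset hR0 hsub1
    have e2 := S.V_le_of_subset hR0 hsub2
    have e3 := S.V_le_of_subset hR0 hsub3
    rw [hVtotdef, hVd12]
    linarith
  have hVtot_le3 : Vtot ≤ 3 * S.V x₁ (2 * S.A0 * (s + D)) := by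
    have e1 := S.V_le_of_subset hR0 hsub1'
    have e2 := S.V_le_of_subset hR0 hsub2'
    have e3 := S.V_le_of_subset hR0 hsub3'
    rw [hVtotdef, hVd12]
    linarith
  -- scaling comparisons
  have hm : (0:ℝ) < max s D := lt_max_iff.2 (Or.inl hs)
  have hscale2 : S.V x₂ (2 * S.A0 * (s + D)) ≤
      max S.Cdim 1 * (4 * S.A0) ^ S.dim * S.V x₂ (max s D) := by
    apply S.V_scale x₂ hm
    · rcases le_total s D with h | h
      · rw [max_eq_right h]
        nlinarith [mul_nonneg hA0.le hs.le, mul_nonneg (sub_nonneg.2 hA1) hD0]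
      · rw [max_eq_left h]
        nlinarith [mul_nonneg hA0.le hD0, mul_nonneg (sub_nonneg.2 hA1) hs.le]
    · rcases le_total s D with h | h
      · rw [max_eq_right h]
        nlinarith [mul_le_mul_of_nonneg_left h h2A.le]
      · rw [max_eq_left h]
        nlinarith [mul_le_mul_of_nonneg_left h h2A.le]
  have hmax_le : S.V x₂ (max s D) ≤ Vsum := by
    rcases le_total s D with h | h
    · rw [max_eq_right h, hVsumdef]
      have hVdD : S.Vd x₂ x₁ = S.V x₂ D := by rw [SHT.Vd, hDsymm]
      rw [← hVdD]
      exact le_add_of_nonneg_left (S.V_nonneg _ _)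
    · rw [max_eq_left h, hVsumdef]
      exact le_add_of_nonneg_right (S.Vd_nonneg _ _)
  have hcmp2 : Vtot ≤ C₂ * Vsum := by
    have h1 : S.V x₂ (2 * S.A0 * (s + D)) ≤ max S.Cdim 1 * (4 * S.A0) ^ S.dim * Vsum :=
      hscale2.trans (mul_le_mul_of_nonneg_left hmax_le (mul_nonneg hCd0.le hp4A.le))
    calc Vtot ≤ 3 * S.V x₂ (2 * S.A0 * (s + D)) := hVtot_le2
      _ ≤ 3 * (max S.Cdim 1 * (4 * S.A0) ^ S.dim * Vsum) := by linarith
      _ = C₂ * Vsum := by rw [hC₂def]; ring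
  have hscale3 : S.V x₁ (2 * S.A0 * (s + D)) ≤
      max S.Cdim 1 * (4 * S.A0 ^ 2) ^ S.dim * S.V x₁ T := by
    apply S.V_scale x₁ hT0
    · rw [hTdef, inv_mul_eq_div, div_le_iff₀ h2A]
      nlinarith [mul_nonneg (mul_nonneg hA0.le hA0.le) hsD.le, mul_nonneg hA0.le hsD.le]
    · rw [hTdef]
      have hkey : 4 * S.A0 ^ 2 * ((2 * S.A0)⁻¹ * (s + D)) = 2 * S.A0 * (s + D) := by
        field_simp
        ring
      linarith [hkey.ge]
  have hcmp3 : Vtot ≤ C₃ * S.V x₁ T := by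
    calc Vtot ≤ 3 * S.V x₁ (2 * S.A0 * (s + D)) := hVtot_le3
      _ ≤ 3 * (max S.Cdim 1 * (4 * S.A0 ^ 2) ^ S.dim * S.V x₁ T) := by linarith
      _ = C₃ * S.V x₁ T := by rw [hC₃def]; ring
  -- inverse comparisons
  have hinv2 : Vsum⁻¹ ≤ C₂ * Vtot⁻¹ := by
    rw [← one_div, show C₂ * Vtot⁻¹ = C₂ / Vtot from (div_eq_mul_inv _ _).symm,
        div_le_div_iff₀ hVsum hVtot]
    linarith
  have hinv3 : (S.V x₁ T)⁻¹ ≤ C₃ * Vtot⁻¹ := by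
    rw [← one_div, show C₃ * Vtot⁻¹ = C₃ / Vtot from (div_eq_mul_inv _ _).symm,
        div_le_div_iff₀ (S.V_pos x₁ hT0) hVtot]
    linarith
  -- the constants K, K₂
  set P : ℝ := (r / s) ^ η * Vtot⁻¹ * (s / (s + D)) ^ γ with hPdef
  have hP0 : 0 < P := by
    rw [hPdef]
    exact mul_pos (mul_pos hρ1 hVtotinv) hσγ
  set K : ℝ := (2 * S.A0) ^ η * C₂ * P with hKdef
  set K₂ : ℝ := (2 * S.A0) ^ (γ + η) * C₃ * P with hK₂def
  have hK0 : 0 < K := by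
    rw [hKdef]
    exact mul_pos (mul_pos hp2Aη hC₂) hP0
  have hK₂0 : 0 < K₂ := by
    rw [hK₂def]
    exact mul_pos (mul_pos hp2Agη hC₃) hP0
  have hrT : r / T = 2 * S.A0 * r / (s + D) := by
    rw [hTdef]
    field_simp
  -- core scalar estimate
  have hcore : ∀ e : ℝ, 0 ≤ e → e ≤ 2 * S.A0 * r / (s + D) →
      e ^ η * (Vsum⁻¹ * (s / (s + D)) ^ (γ + η)) ≤ K := by
    intro e he0 he
    have hid : 2 * S.A0 * r / (s + D) = (2 * S.A0) * ((r / s) * (s / (s + D))) := by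
      field_simp
    have h1 : e ^ η ≤ (2 * S.A0) ^ η * ((r / s) ^ η * (s / (s + D)) ^ η) := by
      calc e ^ η ≤ (2 * S.A0 * r / (s + D)) ^ η := Real.rpow_le_rpow he0 he hη.le
        _ = (2 * S.A0) ^ η * ((r / s) ^ η * (s / (s + D)) ^ η) := by
            rw [hid, Real.mul_rpow h2A.le (mul_nonneg hrs0.le hss0.le),
                Real.mul_rpow hrs0.le hss0.le]
    have h2 : (s / (s + D)) ^ (γ + η) = (s / (s + D)) ^ γ * (s / (s + D)) ^ η :=
      Real.rpow_add hss0 _ _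
    have hB : Vsum⁻¹ * (s / (s + D)) ^ (γ + η) ≤
        (C₂ * Vtot⁻¹) * ((s / (s + D)) ^ γ * (s / (s + D)) ^ η) := by
      rw [h2, ← mul_assoc, ← mul_assoc]
      apply mul_le_mul_of_nonneg_right _ hση.le
      exact mul_le_mul_of_nonneg_right hinv2 hσγ.le
    have hstep := mul_le_mul h1 hB
      (mul_nonneg (inv_nonneg.2 hVsum.le) (Real.rpow_nonneg hss0.le _))
      (mul_nonneg hp2Aη.le (mul_nonneg hρ1.le hση.le))
    calc e ^ η * (Vsum⁻¹ * (s / (s + D)) ^ (γ + η))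
        ≤ ((2 * S.A0) ^ η * ((r / s) ^ η * (s / (s + D)) ^ η)) *
            ((C₂ * Vtot⁻¹) * ((s / (s + D)) ^ γ * (s / (s + D)) ^ η)) := hstep
      _ = K * ((s / (s + D)) ^ η * (s / (s + D)) ^ η) := by
          rw [hKdef, hPdef]; ring
      _ ≤ K * 1 := by
          apply mul_le_mul_of_nonneg_left _ hK0.le
          simpa using mul_le_mul hση1 hση1 hση.le zero_le_one
      _ = K := mul_one _
  -- far pointwise bound for u
  have hfarU : ∀ x, T ≤ S.d x₁ x → |u x| ≤ K₂ := by
    intro x hTx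
    have htpos : 0 < S.d x₁ x := hT0.trans_le hTx
    have hrt : (0:ℝ) < r + S.d x₁ x := by linarith
    have h1 : (S.V x₁ r + S.Vd x₁ x)⁻¹ ≤ C₃ * Vtot⁻¹ := by
      have hVT : S.V x₁ T ≤ S.V x₁ r + S.Vd x₁ x := by
        have h' : S.V x₁ T ≤ S.Vd x₁ x := S.V_mono x₁ htpos hTx
        have h'' := S.V_nonneg x₁ r
        linarith
      exact (inv_anti₀ (S.V_pos x₁ hT0) hVT).trans hinv3
    have hb : r / (r + S.d x₁ x) ≤ 2 * S.A0 * r / (s + D) := by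
      rw [← hrT]
      apply div_le_div_of_nonneg_left hr.le hT0
      linarith
    have h2 : (r / (r + S.d x₁ x)) ^ (γ + η) ≤
        (2 * S.A0) ^ (γ + η) * ((s / (s + D)) ^ γ * (r / s) ^ η) := by
      have hid : 2 * S.A0 * r / (s + D) = (2 * S.A0) * (r / (s + D)) := by ring
      calc (r / (r + S.d x₁ x)) ^ (γ + η) ≤ (2 * S.A0 * r / (s + D)) ^ (γ + η) :=
            Real.rpow_le_rpow (div_nonneg hr.le hrt.le) hb (by linarith)
        _ = (2 * S.A0) ^ (γ + η) * (r / (s + D)) ^ (γ + η) := by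
            rw [hid, Real.mul_rpow h2A.le (div_nonneg hr.le hsD.le)]
        _ ≤ (2 * S.A0) ^ (γ + η) * ((s / (s + D)) ^ γ * (r / s) ^ η) := by
            apply mul_le_mul_of_nonneg_left _ hp2Agη.le
            rw [Real.rpow_add (div_pos hr hsD)]
            apply mul_le_mul
            · apply Real.rpow_le_rpow (div_nonneg hr.le hsD.le) _ hγ.le
              exact (div_le_div_iff_of_pos_right hsD).2 hrs
            · apply Real.rpow_le_rpow (div_nonneg hr.le hsD.le) _ hη.le
              apply div_le_div_of_nonneg_left hr.le hs
              linarith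
            · exact Real.rpow_nonneg (div_nonneg hr.le hsD.le) _
            · exact Real.rpow_nonneg hss0.le _
    calc |u x| ≤ (S.V x₁ r + S.Vd x₁ x)⁻¹ * (r / (r + S.d x₁ x)) ^ (γ + η) := hu x
      _ ≤ (C₃ * Vtot⁻¹) * ((2 * S.A0) ^ (γ + η) * ((s / (s + D)) ^ γ * (r / s) ^ η)) := by
          apply mul_le_mul h1 h2 (Real.rpow_nonneg (div_nonneg hr.le hrt.le) _)
            (mul_nonneg hC₃.le hVtotinv.le)
      _ = K₂ := by rw [hK₂def, hPdef]; ring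
  -- pointwise nonnegativity of the bump
  have hbumpnn : ∀ x, 0 ≤ (S.V x₁ r + S.Vd x₁ x)⁻¹ * (r / (r + S.d x₁ x)) ^ γ := by
    intro x
    have hd := S.d_nonneg x₁ x
    exact mul_nonneg (inv_nonneg.2 (add_nonneg (S.V_nonneg _ _) (S.Vd_nonneg _ _)))
      (Real.rpow_nonneg (div_nonneg hr.le (by linarith)) _)
  have hu' : ∀ x, |u x| ≤ ((S.V x₁ r + S.Vd x₁ x)⁻¹ * (r / (r + S.d x₁ x)) ^ γ) *
      (r / (r + S.d x₁ x)) ^ η := by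
    intro x
    have hd := S.d_nonneg x₁ x
    have hux := hu x
    rwa [Real.rpow_add (div_pos hr (by linarith)), ← mul_assoc] at hux
  -- the key pointwise claim
  have claimA : ∀ x, |u x * (v x - v x₁)| ≤
      K * ((S.V x₁ r + S.Vd x₁ x)⁻¹ * (r / (r + S.d x₁ x)) ^ γ) + K₂ * |v x| := by
    intro x
    have hd := S.d_nonneg x₁ x
    have hrt : (0:ℝ) < r + S.d x₁ x := by linarith
    rcases le_or_gt (S.d x₁ x) T with hcase | hcase
    · -- near case
      have hH := hvH x₁ x (by rw [hDsymm, ← hTdef]; exact hcase)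
      rw [hDsymm] at hH
      have hH' : |v x - v x₁| ≤
          (S.d x₁ x / (s + D)) ^ η * (Vsum⁻¹ * (s / (s + D)) ^ (γ + η)) := by
        rw [abs_sub_comm]
        calc |v x₁ - v x| ≤ (S.d x₁ x / (s + D)) ^ η *
            (S.V x₂ s + S.Vd x₂ x₁)⁻¹ * (s / (s + D)) ^ (γ + η) := hH
          _ = (S.d x₁ x / (s + D)) ^ η * (Vsum⁻¹ * (s / (s + D)) ^ (γ + η)) := by
              rw [hVsumdef]; ring
      have hcomb : |u x * (v x - v x₁)| ≤
          (((S.V x₁ r + S.Vd x₁ x)⁻¹ * (r / (r + S.d x₁ x)) ^ γ) * (r / (r + S.d x₁ x)) ^ η) *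
          ((S.d x₁ x / (s + D)) ^ η * (Vsum⁻¹ * (s / (s + D)) ^ (γ + η))) := by
        rw [abs_mul]
        exact mul_le_mul (hu' x) hH' (abs_nonneg _)
          (mul_nonneg (hbumpnn x) (Real.rpow_nonneg (div_nonneg hr.le hrt.le) _))
      have he : (r / (r + S.d x₁ x)) * (S.d x₁ x / (s + D)) ≤ 2 * S.A0 * r / (s + D) := by
        rw [div_mul_div_comm, div_le_div_iff₀ (mul_pos hrt hsD) hsD]
        have ha1 : r * S.d x₁ x ≤ r * (r + S.d x₁ x) :=
          mul_le_mul_of_nonneg_left (by linarith) hr.le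
        have ha2 : r * (r + S.d x₁ x) ≤ 2 * S.A0 * (r * (r + S.d x₁ x)) :=
          le_mul_of_one_le_left (mul_nonneg hr.le hrt.le) (by linarith)
        calc r * S.d x₁ x * (s + D) ≤ r * (r + S.d x₁ x) * (s + D) :=
              mul_le_mul_of_nonneg_right ha1 hsD.le
          _ ≤ 2 * S.A0 * (r * (r + S.d x₁ x)) * (s + D) :=
              mul_le_mul_of_nonneg_right ha2 hsD.le
          _ = 2 * S.A0 * r * ((r + S.d x₁ x) * (s + D)) := by ring
      calc |u x * (v x - v x₁)| ≤
            (((S.V x₁ r + S.Vd x₁ x)⁻¹ * (r / (r + S.d x₁ x)) ^ γ) * (r / (r + S.d x₁ x)) ^ η) *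
            ((S.d x₁ x / (s + D)) ^ η * (Vsum⁻¹ * (s / (s + D)) ^ (γ + η))) := hcomb
        _ = (((r / (r + S.d x₁ x)) ^ η * (S.d x₁ x / (s + D)) ^ η) *
              (Vsum⁻¹ * (s / (s + D)) ^ (γ + η))) *
              ((S.V x₁ r + S.Vd x₁ x)⁻¹ * (r / (r + S.d x₁ x)) ^ γ) := by ring
        _ = ((((r / (r + S.d x₁ x)) * (S.d x₁ x / (s + D))) ^ η) *
              (Vsum⁻¹ * (s / (s + D)) ^ (γ + η))) *
              ((S.V x₁ r + S.Vd x₁ x)⁻¹ * (r / (r + S.d x₁ x)) ^ γ) := by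
            rw [Real.mul_rpow (div_nonneg hr.le hrt.le) (div_nonneg hd hsD.le)]
        _ ≤ K * ((S.V x₁ r + S.Vd x₁ x)⁻¹ * (r / (r + S.d x₁ x)) ^ γ) := by
            apply mul_le_mul_of_nonneg_right _ (hbumpnn x)
            exact hcore _ (mul_nonneg (div_nonneg hr.le hrt.le) (div_nonneg hd hsD.le)) he
        _ ≤ K * ((S.V x₁ r + S.Vd x₁ x)⁻¹ * (r / (r + S.d x₁ x)) ^ γ) + K₂ * |v x| :=
            le_add_of_nonneg_right (mul_nonneg hK₂0.le (abs_nonneg _))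
    · -- far case
      have hvx1 := hv x₁
      rw [hDsymm] at hvx1
      have hvx1' : |v x₁| ≤ Vsum⁻¹ * (s / (s + D)) ^ (γ + η) := by
        calc |v x₁| ≤ (S.V x₂ s + S.Vd x₂ x₁)⁻¹ * (s / (s + D)) ^ (γ + η) := hvx1
          _ = Vsum⁻¹ * (s / (s + D)) ^ (γ + η) := by rw [hVsumdef]
      have he : r / (r + S.d x₁ x) ≤ 2 * S.A0 * r / (s + D) := by
        rw [← hrT]
        apply div_le_div_of_nonneg_left hr.le hT0
        linarith
      have hterm2 : |u x| * |v x₁| ≤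
          K * ((S.V x₁ r + S.Vd x₁ x)⁻¹ * (r / (r + S.d x₁ x)) ^ γ) := by
        calc |u x| * |v x₁|
            ≤ (((S.V x₁ r + S.Vd x₁ x)⁻¹ * (r / (r + S.d x₁ x)) ^ γ) *
                (r / (r + S.d x₁ x)) ^ η) * (Vsum⁻¹ * (s / (s + D)) ^ (γ + η)) :=
              mul_le_mul (hu' x) hvx1' (abs_nonneg _)
                (mul_nonneg (hbumpnn x) (Real.rpow_nonneg (div_nonneg hr.le hrt.le) _))
          _ = ((r / (r + S.d x₁ x)) ^ η * (Vsum⁻¹ * (s / (s + D)) ^ (γ + η))) *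
              ((S.V x₁ r + S.Vd x₁ x)⁻¹ * (r / (r + S.d x₁ x)) ^ γ) := by ring
          _ ≤ K * ((S.V x₁ r + S.Vd x₁ x)⁻¹ * (r / (r + S.d x₁ x)) ^ γ) := by
              apply mul_le_mul_of_nonneg_right _ (hbumpnn x)
              exact hcore _ (div_nonneg hr.le hrt.le) he
      have hterm1 : |u x| * |v x| ≤ K₂ * |v x| :=
        mul_le_mul_of_nonneg_right (hfarU x hcase.le) (abs_nonneg _)
      calc |u x * (v x - v x₁)| = |u x| * |v x - v x₁| := abs_mul _ _
        _ ≤ |u x| * (|v x| + |v x₁|) :=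
            mul_le_mul_of_nonneg_left (abs_sub _ _) (abs_nonneg _)
        _ = |u x| * |v x| + |u x| * |v x₁| := by ring
        _ ≤ K₂ * |v x| + K * ((S.V x₁ r + S.Vd x₁ x)⁻¹ * (r / (r + S.d x₁ x)) ^ γ) :=
            add_le_add hterm1 hterm2
        _ = K * ((S.V x₁ r + S.Vd x₁ x)⁻¹ * (r / (r + S.d x₁ x)) ^ γ) + K₂ * |v x| := by
            ring
  -- boundedness of v
  have hvb : ∀ x, ‖v x‖ ≤ (S.V x₂ s)⁻¹ := by
    intro x
    have hd := S.d_nonneg x₂ x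
    have h1 : (S.V x₂ s + S.Vd x₂ x)⁻¹ ≤ (S.V x₂ s)⁻¹ :=
      inv_anti₀ (S.V_pos x₂ hs) (le_add_of_nonneg_right (S.Vd_nonneg _ _))
    have h2 : (s / (s + S.d x₂ x)) ^ (γ + η) ≤ 1 :=
      Real.rpow_le_one (div_nonneg hs.le (by linarith))
        ((div_le_one (by linarith)).2 (by linarith)) (by linarith)
    calc ‖v x‖ = |v x| := Real.norm_eq_abs _
      _ ≤ (S.V x₂ s + S.Vd x₂ x)⁻¹ * (s / (s + S.d x₂ x)) ^ (γ + η) := hv x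
      _ ≤ (S.V x₂ s)⁻¹ * 1 := mul_le_mul h1 h2
          (Real.rpow_nonneg (div_nonneg hs.le (by linarith)) _)
          (inv_nonneg.2 (S.V_nonneg _ _))
      _ = (S.V x₂ s)⁻¹ := mul_one _
  have hUVprod : Integrable (fun x => u x * v x) S.μ := by
    have h := hu_int.bdd_mul hv_int.aestronglyMeasurable (Filter.Eventually.of_forall hvb)
    exact h.congr (Filter.Eventually.of_forall fun x => mul_comm _ _)
  have hUV : Integrable (fun x => u x * (v x - v x₁)) S.μ := by
    have hbd : ∀ x, ‖v x - v x₁‖ ≤ (S.V x₂ s)⁻¹ + (S.V x₂ s)⁻¹ := by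
      intro x
      calc ‖v x - v x₁‖ ≤ ‖v x‖ + ‖v x₁‖ := norm_sub_le _ _
        _ ≤ (S.V x₂ s)⁻¹ + (S.V x₂ s)⁻¹ := add_le_add (hvb x) (hvb x₁)
    have hasm : AEStronglyMeasurable (fun x => v x - v x₁) S.μ :=
      hv_int.aestronglyMeasurable.sub aestronglyMeasurable_const
    have h := hu_int.bdd_mul hasm (Filter.Eventually.of_forall hbd)
    exact h.congr (Filter.Eventually.of_forall fun x => mul_comm _ _)
  have hcancel : ∫ x, u x * v x ∂S.μ = ∫ x, u x * (v x - v x₁) ∂S.μ := by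
    have h1 : ∫ x, u x * (v x - v x₁) ∂S.μ
        = ∫ x, (u x * v x - u x * v x₁) ∂S.μ := by
      congr 1
      funext x
      ring
    rw [h1, integral_sub hUVprod (hu_int.mul_const (v x₁)), integral_mul_const, hu0,
        zero_mul, sub_zero]
  -- integral bounds
  have hGint : Integrable (fun x => max (|u x * (v x - v x₁)| - K₂ * |v x|) 0) S.μ := by
    have h1 : Integrable (fun x => |u x * (v x - v x₁)| - K₂ * |v x|) S.μ :=
      hUV.abs.sub (hv_int.abs.const_mul K₂)
    exact h1.pos_part
  have hGbound : ∀ x, |max (|u x * (v x - v x₁)| - K₂ * |v x|) 0| ≤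
      K * ((S.V x₁ r + S.Vd x₁ x)⁻¹ * (r / (r + S.d x₁ x)) ^ γ) := by
    intro x
    rw [abs_of_nonneg (le_max_right _ _)]
    apply max_le
    · have hcA := claimA x
      have hvnn : 0 ≤ K₂ * |v x| := mul_nonneg hK₂0.le (abs_nonneg _)
      linarith
    · exact mul_nonneg hK0.le (hbumpnn x)
  have hGle := hbump₀ r x₁ K _ hr hK0.le hGint hGbound
  have hGle' : ∫ x, max (|u x * (v x - v x₁)| - K₂ * |v x|) 0 ∂S.μ ≤ C₀ * K := by
    calc ∫ x, max (|u x * (v x - v x₁)| - K₂ * |v x|) 0 ∂S.μ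
        = ∫ x, |max (|u x * (v x - v x₁)| - K₂ * |v x|) 0| ∂S.μ :=
          integral_congr_ae (Filter.Eventually.of_forall fun x =>
            (abs_of_nonneg (le_max_right _ _)).symm)
      _ ≤ C₀ * K := hGle
  have hvle : ∫ x, |v x| ∂S.μ ≤ C₁ := by
    have h := hbump₁ s x₂ 1 v hs zero_le_one hv_int (by
      intro x
      rw [one_mul]
      exact hv x)
    simpa using h
  have hFle : ∫ x, |u x * (v x - v x₁)| ∂S.μ ≤ C₀ * K + K₂ * C₁ := by
    have hptw : ∀ x, |u x * (v x - v x₁)| ≤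
        max (|u x * (v x - v x₁)| - K₂ * |v x|) 0 + K₂ * |v x| := by
      intro x
      have h1 : |u x * (v x - v x₁)| - K₂ * |v x| ≤
          max (|u x * (v x - v x₁)| - K₂ * |v x|) 0 := le_max_left _ _
      linarith
    calc ∫ x, |u x * (v x - v x₁)| ∂S.μ
        ≤ ∫ x, (max (|u x * (v x - v x₁)| - K₂ * |v x|) 0 + K₂ * |v x|) ∂S.μ :=
          integral_mono hUV.abs (hGint.add (hv_int.abs.const_mul K₂)) hptw
      _ = (∫ x, max (|u x * (v x - v x₁)| - K₂ * |v x|) 0 ∂S.μ) +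
          ∫ x, K₂ * |v x| ∂S.μ :=
          integral_add hGint (hv_int.abs.const_mul K₂)
      _ = (∫ x, max (|u x * (v x - v x₁)| - K₂ * |v x|) 0 ∂S.μ) +
          K₂ * ∫ x, |v x| ∂S.μ := by
          rw [integral_const_mul]
      _ ≤ C₀ * K + K₂ * C₁ := add_le_add hGle' (mul_le_mul_of_nonneg_left hvle hK₂0.le)
  calc |∫ x, u x * v x ∂S.μ| = |∫ x, u x * (v x - v x₁) ∂S.μ| := by rw [hcancel]
    _ ≤ ∫ x, |u x * (v x - v x₁)| ∂S.μ := by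
        simpa only [Real.norm_eq_abs] using
          norm_integral_le_integral_norm (μ := S.μ) (fun x => u x * (v x - v x₁))
    _ ≤ C₀ * K + K₂ * C₁ := hFle
    _ = (C₀ * (2 * S.A0) ^ η * C₂ + C₁ * (2 * S.A0) ^ (γ + η) * C₃) * P := by
        rw [hKdef, hK₂def]; ring
    _ = (C₀ * (2 * S.A0) ^ η * C₂ + C₁ * (2 * S.A0) ^ (γ + η) * C₃) *
          (r / s) ^ η * Vtot⁻¹ * (s / (s + D)) ^ γ := by
        rw [hPdef]; ring
end
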